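/- If coprime 0 < a < r satisfy r/a = [α₁,...,αₙ] and r/(r−a) = [β₁,...,β_l] (Hirzebruch-Jung expansions), then the fraction with expansion [α₁,...,αₙ,α] (for any integer α ≥ 2) has dual expansion [β₁,...,β_{l-1},β_l+1,2,...,2] with α−2 twos appended at the end. -/

import Mathlib

/-- Hirzebruch-Jung continued fraction: `hjCont [a1,...,an] = (p, q)` means
`[a1,...,an] = p/q` with `p, q` the standard (coprime) continuants. -/
def hjCont : List ℤ → ℤ × ℤ
  | [] => (1, 0)
  | a :: l => (a * (hjCont l).1 - (hjCont l).2, (hjCont l).1)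

/-- Full continuant matrix `(p, q, u, v)` meaning `[[p, u], [q, v]]`,
the product of the matrices `[[aᵢ, -1], [1, 0]]`. -/
def hjM : List ℤ → ℤ × ℤ × ℤ × ℤ
  | [] => (1, 0, 0, 1)
  | a :: l => (a * (hjM l).1 - (hjM l).2.1, (hjM l).1,
      a * (hjM l).2.2.1 - (hjM l).2.2.2, (hjM l).2.2.1)

def hjMul (m n : ℤ × ℤ × ℤ × ℤ) : ℤ × ℤ × ℤ × ℤ :=
  (m.1 * n.1 + m.2.2.1 * n.2.1, m.2.1 * n.1 + m.2.2.2 * n.2.1,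
   m.1 * n.2.2.1 + m.2.2.1 * n.2.2.2, m.2.1 * n.2.2.1 + m.2.2.2 * n.2.2.2)

lemma hjM_fst (L : List ℤ) : hjCont L = ((hjM L).1, (hjM L).2.1) := by
  induction L with
  | nil => simp [hjM, hjCont]
  | cons a l ih => simp [hjM, hjCont, ih]

lemma hjM_append (L1 L2 : List ℤ) : hjM (L1 ++ L2) = hjMul (hjM L1) (hjM L2) := by
  induction L1 with
  | nil => simp [hjM, hjMul]
  | cons a l ih =>
    have : (a :: l) ++ L2 = a :: (l ++ L2) := rfl
    rw [this]
    show ((a * (hjM (l ++ L2)).1 - (hjM (l ++ L2)).2.1, (hjM (l ++ L2)).1,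
      a * (hjM (l ++ L2)).2.2.1 - (hjM (l ++ L2)).2.2.2, (hjM (l ++ L2)).2.2.1) : ℤ×ℤ×ℤ×ℤ) = _
    rw [ih]
    show _ = ((_ : ℤ×ℤ×ℤ×ℤ))
    simp only [hjM, hjMul, Prod.mk.injEq]
    refine ⟨by ring, trivial, by ring, trivial⟩

lemma hjM_det (L : List ℤ) :
    (hjM L).1 * (hjM L).2.2.2 - (hjM L).2.1 * (hjM L).2.2.1 = 1 := by
  induction L with
  | nil => simp [hjM]
  | cons a l ih =>
    simp only [hjM]
    linear_combination ih

lemma hjM_replicate (k : ℕ) :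
    hjM (List.replicate k 2) = ((k : ℤ) + 1, (k : ℤ), -(k : ℤ), 1 - (k : ℤ)) := by
  induction k with
  | zero => simp [hjM]
  | succ n ih =>
    simp only [List.replicate_succ, hjM, ih, Prod.mk.injEq]
    push_cast
    refine ⟨by ring, by ring, by ring, by ring⟩

lemma hjM_bounds (L : List ℤ) (h : ∀ x ∈ L, 2 ≤ x) :
    0 ≤ (hjM L).2.1 ∧ (hjM L).2.1 < (hjM L).1 ∧ -(hjM L).1 < (hjM L).2.2.1 ∧
      (hjM L).2.2.1 ≤ 0 ∧ (hjM L).2.2.1 ≤ (hjM L).2.2.2 ∧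
      (hjM L).2.2.2 ≤ (hjM L).2.1 + 1 ∧
      (hjM L).2.1 + (hjM L).2.2.2 ≤ (hjM L).1 + (hjM L).2.2.1 := by
  induction L with
  | nil => simp [hjM]
  | cons x l ih =>
    have hx : 2 ≤ x := h x (by simp)
    obtain ⟨h1, h2, h3, h4, h5, h6, h7⟩ := ih (fun y hy => h y (by simp [hy]))
    rcases hE : hjM l with ⟨p, q, u, v⟩
    rw [hE] at h1 h2 h3 h4 h5 h6 h7
    simp only at h1 h2 h3 h4 h5 h6 h7
    simp only [hjM, hE]
    have hp0 : 0 < p := by linarith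
    have e1 : 0 ≤ (x - 2) * p := mul_nonneg (by linarith) (by linarith)
    have e2 : 0 ≤ x * (p + u) := mul_nonneg (by linarith) (by linarith)
    have e3 : 2 * (p + u) ≤ x * (p + u) :=
      mul_le_mul_of_nonneg_right (by linarith) (by linarith)
    have e4 : (x - 2) * u ≤ 0 := mul_nonpos_of_nonneg_of_nonpos (by linarith) h4
    refine ⟨by linarith, by nlinarith, by nlinarith, by nlinarith, by nlinarith, by linarith,
      by nlinarith⟩

theorem stmt2 (r a : ℤ) (hcop : IsCoprime r a) (h1 : 0 < a) (h2 : a < r)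
    (αs βs' : List ℤ) (βl α : ℤ)
    (hα : ∀ x ∈ αs, 2 ≤ x) (hβ : ∀ x ∈ βs' ++ [βl], 2 ≤ x) (hαα : 2 ≤ α)
    (hαs : hjCont αs = (r, a)) (hβs : hjCont (βs' ++ [βl]) = (r, r - a)) :
    hjCont ((βs' ++ [βl + 1]) ++ List.replicate (α - 2).toNat 2) =
      ((hjCont (αs ++ [α])).1, (hjCont (αs ++ [α])).1 - (hjCont (αs ++ [α])).2) := by
  have hβl : 2 ≤ βl := hβ βl (by simp)
  have hk : ((α - 2).toNat : ℤ) = α - 2 := Int.toNat_of_nonneg (by linarith)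
  -- data for αs
  rcases hA0 : hjM αs with ⟨p, q, u, v⟩
  have hpq : p = r ∧ q = a := by
    have := hjM_fst αs; rw [hA0, hαs] at this
    simp only [Prod.mk.injEq] at this
    exact ⟨this.1.symm, this.2.symm⟩
  have hA : hjM αs = (r, a, u, v) := by rw [hA0, hpq.1, hpq.2]
  have hdetA : r * v - a * u = 1 := by have := hjM_det αs; rw [hA] at this; exact this
  have hbndA := hjM_bounds αs hα
  rw [hA] at hbndA
  obtain ⟨-, -, hA3, hA4, hA5, -, -⟩ := hbndA
  simp only at hA3 hA4 hA5
  -- data for βs'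
  rcases hB : hjM βs' with ⟨b, c, d, e⟩
  have hβ' : ∀ x ∈ βs', 2 ≤ x := fun x hx => hβ x (by simp [hx])
  have hbndB := hjM_bounds βs' hβ'
  rw [hB] at hbndB
  obtain ⟨hB1, hB2, hB3, hB4, -, -, -⟩ := hbndB
  simp only at hB1 hB2 hB3 hB4
  have hMβl : hjM [βl] = (βl, 1, -1, 0) := by simp [hjM]
  have hBfull : hjM (βs' ++ [βl]) = (b * βl + d, c * βl + e, -b, -c) := by
    rw [hjM_append, hB, hMβl]
    simp [hjMul]
  have hβ1 : b * βl + d = r := by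
    have := hjM_fst (βs' ++ [βl]); rw [hBfull, hβs] at this
    exact ((Prod.mk.injEq _ _ _ _).mp this.symm).1
  have hβ2 : c * βl + e = r - a := by
    have := hjM_fst (βs' ++ [βl]); rw [hBfull, hβs] at this
    exact ((Prod.mk.injEq _ _ _ _).mp this.symm).2
  have hdetB : (r - a) * b - r * c = 1 := by
    have := hjM_det (βs' ++ [βl]); rw [hBfull] at this
    simp only at this
    rw [hβ1, hβ2] at this
    linarith
  -- bounds
  have hbr : b < r := by
    nlinarith [mul_nonneg (show (0:ℤ) ≤ βl - 2 by linarith) (show (0:ℤ) ≤ b by linarith)]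
  have hb1 : 1 ≤ b := by linarith
  -- coprimality and uniqueness
  have hcop' : IsCoprime r (r - a) := by
    have h := (hcop.neg_right).add_mul_left_right 1
    rwa [show -a + r * 1 = r - a by ring] at h
  have hkey : (r - a) * (b - (r + u)) = r * (c - (r - a + u - v)) := by
    linear_combination hdetB - hdetA
  have hdvd : r ∣ (b - (r + u)) := by
    refine hcop'.dvd_of_dvd_mul_left ?_
    exact ⟨c - (r - a + u - v), by linear_combination hkey⟩
  obtain ⟨t, ht⟩ := hdvd
  have hr0 : 0 < r := by linarith
  have ht0 : t = 0 := by
    rcases lt_trichotomy t 0 with h | h | h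
    · have : t ≤ -1 := by omega
      have := mul_le_mul_of_nonneg_left this (le_of_lt hr0)
      nlinarith
    · exact h
    · have : 1 ≤ t := by omega
      have := mul_le_mul_of_nonneg_left this (le_of_lt hr0)
      nlinarith
  have hb : b = r + u := by rw [ht0, mul_zero] at ht; linarith
  have hc : c = r - a + u - v := by
    rw [hb] at hkey
    simp only [sub_self, mul_zero] at hkey
    have := mul_eq_zero.mp hkey.symm
    rcases this with h | h
    · exact absurd h (by omega)
    · linarith
  -- compute both sides
  have hMβl1 : hjM [βl + 1] = (βl + 1, 1, -1, 0) := by simp [hjM]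
  have hMα : hjM [α] = (α, 1, -1, 0) := by simp [hjM]
  have hL : hjM ((βs' ++ [βl + 1]) ++ List.replicate (α - 2).toNat 2) =
      hjMul (hjMul (b, c, d, e) (βl + 1, 1, -1, 0))
        (((α - 2).toNat : ℤ) + 1, ((α - 2).toNat : ℤ), -((α - 2).toNat : ℤ),
          1 - ((α - 2).toNat : ℤ)) := by
    rw [hjM_append, hjM_append, hB, hMβl1, hjM_replicate]
  have hR : hjM (αs ++ [α]) = hjMul (r, a, u, v) (α, 1, -1, 0) := by
    rw [hjM_append, hA, hMα]
  rw [hjM_fst, hjM_fst, hL, hR, hk]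
  simp only [hjMul, Prod.mk.injEq]
  constructor
  · linear_combination (α - 1) * hβ1 + hb
  · linear_combination (α - 1) * hβ2 + hc
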